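/- Let b : ℝ⁴ × ℝ⁴ → ℂ be a measurable function with |b(x,y)| ≤ M for all x, y, and define the kernel G(x,y) = b(x,y)/‖x-y‖². Let f : ℝ⁴ → ℂ be a measurable function satisfying |f(x)| ≤ C/(1+‖x‖⁴) for all x, for some constant C > 0. Then the function F(x) := ∫_{ℝ⁴} G(x,y) f(y) dy is well defined for all x and there exists a constant K > 0 such that |F(x)| ≤ K · log(2+‖x‖)/‖x‖² for all x with ‖x‖ ≥ 1. In particular, F(x) = O(‖x‖^{-2+ε}) as ‖x‖ → ∞ for every ε > 0. -/

import Mathlib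

open MeasureTheory Real Set Metric

noncomputable section GreenAux

local notation "E4" => EuclideanSpace ℝ (Fin 4)

noncomputable def gkdV : ℝ := (volume (Metric.ball (0 : EuclideanSpace ℝ (Fin 4)) 1)).toReal

lemma gkd_V_pos : 0 < gkdV :=
  ENNReal.toReal_pos (measure_ball_pos volume _ one_pos).ne' measure_ball_lt_top.ne

lemma gkd_finrank : Module.finrank ℝ (EuclideanSpace ℝ (Fin 4)) = 4 := by
  simp [finrank_euclideanSpace]

lemma gkd_polar (f : ℝ → ℝ) :
    ∫ x : E4, f ‖x‖ = 4 * gkdV * ∫ s in Set.Ioi (0:ℝ), s ^ 3 * f s := by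
  rw [integral_fun_norm_addHaar volume f]
  simp only [gkd_finrank, smul_eq_mul, nsmul_eq_mul, gkdV, measureReal_def]
  ring

lemma gkd_integrable_radial {f : ℝ → ℝ} (hf : Measurable f)
    (h : IntegrableOn (fun s => s ^ 3 * f s) (Set.Ioi (0:ℝ))) :
    Integrable (fun x : E4 => f ‖x‖) := by
  have h0 : MeasurableSet ({(0:E4)}ᶜ) := (measurableSet_singleton _).compl
  have hIoi : MeasurableSet (Set.Ioi (0:ℝ)) := measurableSet_Ioi
  have h1 : Integrable (fun r : Set.Ioi (0:ℝ) => f r.1) (Measure.volumeIoiPow 3) := by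
    rw [Measure.volumeIoiPow, integrable_withDensity_iff_integrable_smul'
      (by fun_prop) (by filter_upwards with r using ENNReal.ofReal_lt_top)]
    have : (fun r : Set.Ioi (0:ℝ) => (ENNReal.ofReal (r.1 ^ 3)).toReal • f r.1)
        = (fun s : ℝ => s ^ 3 * f s) ∘ (Subtype.val) := by
      funext r
      simp [ENNReal.toReal_ofReal (pow_nonneg (le_of_lt r.2) 3), smul_eq_mul]
    rw [this, ← (MeasurableEmbedding.subtype_coe hIoi).integrable_map_iff,
      map_comap_subtype_coe hIoi]
    exact h
  have h2 : Integrable (fun p : Metric.sphere (0:E4) 1 × Set.Ioi (0:ℝ) => f p.2.1)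
      ((volume : Measure E4).toSphere.prod (Measure.volumeIoiPow 3)) := by
    have hmeas : AEStronglyMeasurable (fun p : Metric.sphere (0:E4) 1 × Set.Ioi (0:ℝ) => f p.2.1)
        ((volume : Measure E4).toSphere.prod (Measure.volumeIoiPow 3)) :=
      (hf.comp (measurable_subtype_coe.comp measurable_snd)).aestronglyMeasurable
    rw [integrable_prod_iff' hmeas]
    refine ⟨by filter_upwards with r using integrable_const _, ?_⟩
    have : (fun r : Set.Ioi (0:ℝ) =>
        ∫ _ : Metric.sphere (0:E4) 1, ‖f r.1‖ ∂(volume : Measure E4).toSphere)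
        = fun r : Set.Ioi (0:ℝ) =>
          ((volume : Measure E4).toSphere Set.univ).toReal * ‖f r.1‖ := by
      funext r; rw [integral_const]; simp [smul_eq_mul, measureReal_def]
    rw [this]
    exact h1.norm.const_mul _
  have hdim : Module.finrank ℝ (EuclideanSpace ℝ (Fin 4)) - 1 = 3 := by rw [gkd_finrank]
  rw [← hdim] at h2
  have h3 := ((Measure.measurePreserving_homeomorphUnitSphereProd
      (volume : Measure E4)).integrable_comp_emb
      (Homeomorph.measurableEmbedding _)).2 h2
  have h4 : Integrable (fun x : ({(0:E4)}ᶜ : Set E4) => f ‖x.1‖)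
      ((volume : Measure E4).comap Subtype.val) :=
      h3.congr (Filter.Eventually.of_forall fun x => by simp [Function.comp])
  rw [show (fun x : ({(0:E4)}ᶜ : Set E4) => f ‖x.1‖)
      = ((fun x : E4 => f ‖x‖) ∘ Subtype.val) from rfl,
    ← (MeasurableEmbedding.subtype_coe h0).integrable_map_iff,
    map_comap_subtype_coe h0] at h4
  have h5 : IntegrableOn (fun x : E4 => f ‖x‖) ({(0:E4)}ᶜ) := h4
  rwa [IntegrableOn, restrict_compl_singleton] at h5


/-- Piece 1: the quadratic singularity integrated over a ball. -/
lemma gkd_ball (r : ℝ) (hr : 0 < r) :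
    IntegrableOn (fun z : E4 => (‖z‖ ^ 2)⁻¹) (Metric.ball (0:E4) r) ∧
    ∫ z in Metric.ball (0:E4) r, (‖z‖ ^ 2)⁻¹ = 2 * gkdV * r ^ 2 := by
  set f : ℝ → ℝ := fun s => if s < r then (s ^ 2)⁻¹ else 0 with hfdef
  have hfm : Measurable f := Measurable.ite measurableSet_Iio (by fun_prop) measurable_const
  have hfun : (fun z : E4 => f ‖z‖)
      = (Metric.ball (0:E4) r).indicator (fun z => (‖z‖ ^ 2)⁻¹) := by
    funext z
    by_cases hz : z ∈ Metric.ball (0:E4) r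
    · rw [indicator_of_mem hz]
      exact if_pos (mem_ball_zero_iff.1 hz)
    · rw [indicator_of_notMem hz]
      exact if_neg (fun h => hz (mem_ball_zero_iff.2 h))
  have heq : EqOn (fun s : ℝ => s ^ 3 * f s) ((Set.Ioo (0:ℝ) r).indicator (fun s => s))
      (Set.Ioi (0:ℝ)) := by
    intro s hs
    have hs0 : (0:ℝ) < s := hs
    simp only [hfdef]
    by_cases h : s < r
    · rw [if_pos h, indicator_of_mem (Set.mem_Ioo.2 ⟨hs0, h⟩)]
      field_simp
    · rw [if_neg h, indicator_of_notMem (fun hm => h (Set.mem_Ioo.1 hm).2)]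
      simp
  have hind : Integrable ((Set.Ioo (0:ℝ) r).indicator (fun s : ℝ => s)) :=
    (integrable_indicator_iff measurableSet_Ioo).2
      ((intervalIntegrable_iff_integrableOn_Ioo_of_le hr.le).1
        (continuous_id.intervalIntegrable 0 r))
  have hint : IntegrableOn (fun s : ℝ => s ^ 3 * f s) (Set.Ioi (0:ℝ)) :=
    (hind.integrableOn).congr_fun heq.symm measurableSet_Ioi
  have hval : ∫ s in Set.Ioi (0:ℝ), s ^ 3 * f s = r ^ 2 / 2 := by
    rw [setIntegral_congr_fun measurableSet_Ioi heq, setIntegral_indicator measurableSet_Ioo]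
    have h2 : Set.Ioi (0:ℝ) ∩ Set.Ioo 0 r = Set.Ioo 0 r := by
      ext s; simp only [Set.mem_inter_iff, Set.mem_Ioi, Set.mem_Ioo]; tauto
    rw [h2, ← integral_Ioc_eq_integral_Ioo, ← intervalIntegral.integral_of_le hr.le,
      integral_id]
    ring
  constructor
  · rw [← integrable_indicator_iff measurableSet_ball, ← hfun]
    exact gkd_integrable_radial hfm hint
  · rw [← integral_indicator measurableSet_ball, ← hfun, gkd_polar, hval]
    ring

/-- Piece 2: the smooth weight integrated over a ball, giving the log. -/
lemma gkd_mid (R : ℝ) (hR : 0 < R) :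
    IntegrableOn (fun y : E4 => (1 + ‖y‖ ^ 4)⁻¹) (Metric.ball (0:E4) R) ∧
    ∫ y in Metric.ball (0:E4) R, (1 + ‖y‖ ^ 4)⁻¹ = gkdV * Real.log (1 + R ^ 4) := by
  set f : ℝ → ℝ := fun s => if s < R then (1 + s ^ 4)⁻¹ else 0 with hfdef
  have hfun : (fun y : E4 => f ‖y‖)
      = (Metric.ball (0:E4) R).indicator (fun y => (1 + ‖y‖ ^ 4)⁻¹) := by
    funext z
    by_cases hz : z ∈ Metric.ball (0:E4) R
    · rw [indicator_of_mem hz]; exact if_pos (mem_ball_zero_iff.1 hz)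
    · rw [indicator_of_notMem hz]; exact if_neg (fun h => hz (mem_ball_zero_iff.2 h))
  have hcont : Continuous (fun s : ℝ => s ^ 3 * (1 + s ^ 4)⁻¹) := by
    apply Continuous.mul (by fun_prop)
    exact Continuous.inv₀ (by fun_prop) (fun s => by positivity)
  have heq : EqOn (fun s : ℝ => s ^ 3 * f s)
      ((Set.Ioo (0:ℝ) R).indicator (fun s => s ^ 3 * (1 + s ^ 4)⁻¹)) (Set.Ioi (0:ℝ)) := by
    intro s hs
    have hs0 : (0:ℝ) < s := hs
    simp only [hfdef]
    by_cases h : s < R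
    · rw [if_pos h, indicator_of_mem (Set.mem_Ioo.2 ⟨hs0, h⟩)]
    · rw [if_neg h, indicator_of_notMem (fun hm => h (Set.mem_Ioo.1 hm).2)]
      simp
  have hval : ∫ s in Set.Ioi (0:ℝ), s ^ 3 * f s = Real.log (1 + R ^ 4) / 4 := by
    rw [setIntegral_congr_fun measurableSet_Ioi heq, setIntegral_indicator measurableSet_Ioo]
    have h2 : Set.Ioi (0:ℝ) ∩ Set.Ioo 0 R = Set.Ioo 0 R := by
      ext s; simp only [Set.mem_inter_iff, Set.mem_Ioi, Set.mem_Ioo]; tauto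
    rw [h2, ← integral_Ioc_eq_integral_Ioo, ← intervalIntegral.integral_of_le hR.le]
    have hderiv : ∀ s ∈ Set.uIcc (0:ℝ) R,
        HasDerivAt (fun u : ℝ => Real.log (1 + u ^ 4) / 4) (s ^ 3 * (1 + s ^ 4)⁻¹) s := by
      intro s _
      have h1 : HasDerivAt (fun u : ℝ => 1 + u ^ 4) (4 * s ^ 3) s := by
        simpa using ((hasDerivAt_pow 4 s).const_add 1)
      have h2 := (h1.log (by positivity)).div_const 4
      refine h2.congr_deriv ?_
      ring
    rw [intervalIntegral.integral_eq_sub_of_hasDerivAt hderiv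
      (hcont.intervalIntegrable 0 R)]
    norm_num
  constructor
  · refine Integrable.mono' (g := fun _ => (1:ℝ))
      (integrableOn_const (C := (1:ℝ)) measure_ball_lt_top.ne)
      (Measurable.aestronglyMeasurable (by fun_prop)) ?_
    filter_upwards with y
    rw [Real.norm_eq_abs, abs_of_nonneg (by positivity), inv_le_one_iff₀]
    right; nlinarith [pow_nonneg (norm_nonneg y) 4]
  · rw [← integral_indicator measurableSet_ball, ← hfun, gkd_polar, hval]
    ring

/-- Piece 3: the sextic decay integrated outside a ball. -/
lemma gkd_out (ρ : ℝ) (hρ : 0 < ρ) :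
    IntegrableOn (fun y : E4 => (‖y‖ ^ 6)⁻¹) ((Metric.ball (0:E4) ρ)ᶜ) ∧
    ∫ y in (Metric.ball (0:E4) ρ)ᶜ, (‖y‖ ^ 6)⁻¹ = 2 * gkdV * (ρ ^ 2)⁻¹ := by
  set f : ℝ → ℝ := fun s => if s < ρ then 0 else (s ^ 6)⁻¹ with hfdef
  have hfm : Measurable f := Measurable.ite measurableSet_Iio measurable_const (by fun_prop)
  have hfun : (fun y : E4 => f ‖y‖)
      = ((Metric.ball (0:E4) ρ)ᶜ).indicator (fun y => (‖y‖ ^ 6)⁻¹) := by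
    funext z
    by_cases hz : ‖z‖ < ρ
    · rw [indicator_of_notMem (by simpa [mem_ball_zero_iff] using hz)]
      exact if_pos hz
    · rw [indicator_of_mem (by simpa [mem_ball_zero_iff] using hz)]
      exact if_neg hz
  have heq : EqOn (fun s : ℝ => s ^ 3 * f s)
      ((Set.Ici ρ).indicator (fun s => s ^ (-3 : ℝ))) (Set.Ioi (0:ℝ)) := by
    intro s hs
    have hs0 : (0:ℝ) < s := hs
    simp only [hfdef]
    by_cases h : s < ρ
    · rw [if_pos h, indicator_of_notMem (fun hm => absurd (Set.mem_Ici.1 hm) (not_le.2 h))]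
      simp
    · rw [if_neg h, indicator_of_mem (Set.mem_Ici.2 (not_lt.1 h))]
      rw [show (-3:ℝ) = -((3:ℕ):ℝ) by norm_num, Real.rpow_neg hs0.le, Real.rpow_natCast]
      field_simp
  have hintIci : IntegrableOn (fun s : ℝ => s ^ (-3:ℝ)) (Set.Ici ρ) :=
    (integrableOn_Ici_iff_integrableOn_Ioi (by simp)).2 (integrableOn_Ioi_rpow_of_lt (by norm_num) hρ)
  have hind : Integrable ((Set.Ici ρ).indicator (fun s : ℝ => s ^ (-3:ℝ))) :=
    (integrable_indicator_iff measurableSet_Ici).2 hintIci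
  have hint : IntegrableOn (fun s : ℝ => s ^ 3 * f s) (Set.Ioi (0:ℝ)) :=
    (hind.integrableOn).congr_fun heq.symm measurableSet_Ioi
  have hrp : ρ ^ (-2:ℝ) = (ρ ^ 2)⁻¹ := by
    rw [show (-2:ℝ) = -((2:ℕ):ℝ) by norm_num, Real.rpow_neg hρ.le, Real.rpow_natCast]
  have hval : ∫ s in Set.Ioi (0:ℝ), s ^ 3 * f s = (ρ ^ 2)⁻¹ / 2 := by
    rw [setIntegral_congr_fun measurableSet_Ioi heq, setIntegral_indicator measurableSet_Ici]
    have h2 : Set.Ioi (0:ℝ) ∩ Set.Ici ρ = Set.Ici ρ := by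
      ext s; simp only [Set.mem_inter_iff, Set.mem_Ioi, Set.mem_Ici]
      constructor
      · tauto
      · intro h; exact ⟨lt_of_lt_of_le hρ h, h⟩
    rw [h2, integral_Ici_eq_integral_Ioi, integral_Ioi_rpow_of_lt (by norm_num) hρ]
    rw [show (-3:ℝ) + 1 = -2 by norm_num, hrp]
    ring
  constructor
  · rw [← integrable_indicator_iff measurableSet_ball.compl, ← hfun]
    exact gkd_integrable_radial hfm hint
  · rw [← integral_indicator measurableSet_ball.compl, ← hfun, gkd_polar, hval]
    ring

/-- Translated version of piece 1. -/
lemma gkd_ball_x (x : E4) (r : ℝ) (hr : 0 < r) :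
    IntegrableOn (fun y : E4 => (‖x - y‖ ^ 2)⁻¹) (Metric.ball x r) ∧
    ∫ y in Metric.ball x r, (‖x - y‖ ^ 2)⁻¹ = 2 * gkdV * r ^ 2 := by
  obtain ⟨hint, hval⟩ := gkd_ball r hr
  set g : E4 → ℝ := (Metric.ball (0:E4) r).indicator (fun z => (‖z‖ ^ 2)⁻¹) with hgdef
  have hg : Integrable g := (integrable_indicator_iff measurableSet_ball).2 hint
  have hkey : (Metric.ball x r).indicator (fun y : E4 => (‖x - y‖ ^ 2)⁻¹)
      = fun y => g (x - y) := by
    funext y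
    have hmem : y ∈ Metric.ball x r ↔ x - y ∈ Metric.ball (0:E4) r := by
      rw [mem_ball, mem_ball_zero_iff, dist_eq_norm, norm_sub_rev]
    by_cases hy : y ∈ Metric.ball x r
    · rw [indicator_of_mem hy, hgdef, indicator_of_mem (hmem.1 hy)]
    · rw [indicator_of_notMem hy, hgdef, indicator_of_notMem (fun h => hy (hmem.2 h))]
  constructor
  · rw [← integrable_indicator_iff measurableSet_ball, hkey]
    exact hg.comp_sub_left x
  · rw [← integral_indicator measurableSet_ball, hkey, integral_sub_left_eq_self g volume x,
      hgdef, integral_indicator measurableSet_ball, hval]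


end GreenAux

set_option maxHeartbeats 1600000 in
/-- Proposition 4.1 of the paper: for a kernel `G(x,y) = b(x,y)/‖x-y‖²` with `b`
bounded and measurable, and a measurable `f` with `|f(x)| ≤ C/(1+‖x‖⁴)`, the function
`F(x) = ∫ G(x,y) f(y) dy` is well defined (the integrand is integrable for every `x`),
satisfies `|F(x)| ≤ K log(2+‖x‖)/‖x‖²` for `‖x‖ ≥ 1`, and in particular is
`O(‖x‖^{-2+ε})` for every `ε > 0`. -/
theorem green_kernel_decay
    (b : EuclideanSpace ℝ (Fin 4) × EuclideanSpace ℝ (Fin 4) → ℂ)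
    (hb : Measurable b) (M : ℝ) (hbM : ∀ x y, ‖b (x, y)‖ ≤ M)
    (f : EuclideanSpace ℝ (Fin 4) → ℂ) (hf : Measurable f)
    (C : ℝ) (hC : 0 < C) (hfC : ∀ x, ‖f x‖ ≤ C / (1 + ‖x‖ ^ 4)) :
    (∀ x, Integrable (fun y => b (x, y) / ((‖x - y‖ : ℂ) ^ 2) * f y)) ∧
    (∃ K > (0 : ℝ), ∀ x : EuclideanSpace ℝ (Fin 4), 1 ≤ ‖x‖ →
      ‖∫ y, b (x, y) / ((‖x - y‖ : ℂ) ^ 2) * f y‖ ≤ K * Real.log (2 + ‖x‖) / ‖x‖ ^ 2) ∧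
    (∀ ε > (0 : ℝ), ∃ K' > (0 : ℝ), ∀ x : EuclideanSpace ℝ (Fin 4), 1 ≤ ‖x‖ →
      ‖∫ y, b (x, y) / ((‖x - y‖ : ℂ) ^ 2) * f y‖ ≤ K' * ‖x‖ ^ (-2 + ε)) := by
  have hM0 : 0 ≤ M := le_trans (norm_nonneg _) (hbM 0 0)
  set p : EuclideanSpace ℝ (Fin 4) → EuclideanSpace ℝ (Fin 4) → ℝ :=
    fun x y => (‖x - y‖ ^ 2)⁻¹ * (1 + ‖y‖ ^ 4)⁻¹ with hpdef
  have hp_nonneg : ∀ x y, 0 ≤ p x y := fun x y => by rw [hpdef]; positivity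
  have hbound : ∀ x y, ‖b (x, y) / ((‖x - y‖ : ℂ) ^ 2) * f y‖ ≤ M * C * p x y := by
    intro x y
    have hnorm : ‖((‖x - y‖ : ℝ) : ℂ) ^ 2‖ = ‖x - y‖ ^ 2 := by
      rw [norm_pow, Complex.norm_real, Real.norm_eq_abs, abs_norm]
    rw [norm_mul, norm_div, hnorm, div_eq_mul_inv]
    have h1 : ‖f y‖ ≤ C * (1 + ‖y‖ ^ 4)⁻¹ := by
      rw [← div_eq_mul_inv]; exact hfC y
    calc ‖b (x, y)‖ * (‖x - y‖ ^ 2)⁻¹ * ‖f y‖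
        ≤ M * (‖x - y‖ ^ 2)⁻¹ * (C * (1 + ‖y‖ ^ 4)⁻¹) :=
          mul_le_mul (mul_le_mul_of_nonneg_right (hbM x y) (by positivity)) h1
            (norm_nonneg _) (by positivity)
      _ = M * C * p x y := by rw [hpdef]; ring
  have hmeasψ : ∀ x, AEStronglyMeasurable
      (fun y => b (x, y) / ((‖x - y‖ : ℂ) ^ 2) * f y) volume := by
    intro x
    apply Measurable.aestronglyMeasurable
    refine Measurable.mul (Measurable.div (hb.comp (measurable_const.prodMk measurable_id)) ?_) hf
    exact (Complex.measurable_ofReal.comp ((measurable_const.sub measurable_id).norm)).pow_const 2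
  have hpmeas : ∀ x : EuclideanSpace ℝ (Fin 4), Measurable (p x) := by
    intro x; rw [hpdef]; fun_prop
  -- auxiliary inequalities
  have hinvone : ∀ y : EuclideanSpace ℝ (Fin 4), (1 + ‖y‖ ^ 4)⁻¹ ≤ 1 := by
    intro y
    rw [inv_le_one_iff₀]
    right; nlinarith [pow_nonneg (norm_nonneg y) 4]
  have hfar : ∀ (x y : EuclideanSpace ℝ (Fin 4)), 2 * ‖x‖ ≤ ‖y‖ → 0 < ‖y‖ →
      p x y ≤ 4 * (‖y‖ ^ 6)⁻¹ := by
    intro x y hy2 hy0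
    have hxy : ‖y‖ / 2 ≤ ‖x - y‖ := by
      have h4 : ‖y‖ - ‖x‖ ≤ ‖y - x‖ := norm_sub_norm_le y x
      have h5 : ‖y - x‖ = ‖x - y‖ := norm_sub_rev _ _
      linarith
    have e1 : (‖x - y‖ ^ 2)⁻¹ ≤ 4 * (‖y‖ ^ 2)⁻¹ := by
      have h6 : (‖y‖ / 2) ^ 2 ≤ ‖x - y‖ ^ 2 :=
        pow_le_pow_left₀ (by positivity) hxy 2
      calc (‖x - y‖ ^ 2)⁻¹ ≤ ((‖y‖ / 2) ^ 2)⁻¹ := by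
            apply inv_anti₀ (by positivity) h6
        _ = 4 * (‖y‖ ^ 2)⁻¹ := by rw [div_pow, inv_div]; ring
    have e2 : (1 + ‖y‖ ^ 4)⁻¹ ≤ (‖y‖ ^ 4)⁻¹ :=
      inv_anti₀ (by positivity) (by linarith)
    rw [hpdef]
    calc (‖x - y‖ ^ 2)⁻¹ * (1 + ‖y‖ ^ 4)⁻¹ ≤ (4 * (‖y‖ ^ 2)⁻¹) * (‖y‖ ^ 4)⁻¹ :=
          mul_le_mul e1 e2 (by positivity) (by positivity)
      _ = 4 * (‖y‖ ^ 6)⁻¹ := by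
          rw [mul_assoc, ← mul_inv, ← pow_add]
  -- integrability of the dominating function
  have hPint : ∀ x : EuclideanSpace ℝ (Fin 4), Integrable (p x) := by
    intro x
    set ρ : ℝ := 2 * ‖x‖ + 2 with hρdef
    have hρ : 0 < ρ := by positivity
    have hs1 : IntegrableOn (p x) (Metric.ball x 1) := by
      refine Integrable.mono' (gkd_ball_x x 1 one_pos).1
        ((hpmeas x).aestronglyMeasurable.restrict) ?_
      filter_upwards with y
      rw [Real.norm_eq_abs, abs_of_nonneg (hp_nonneg x y), hpdef]
      calc (‖x - y‖ ^ 2)⁻¹ * (1 + ‖y‖ ^ 4)⁻¹ ≤ (‖x - y‖ ^ 2)⁻¹ * 1 :=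
            mul_le_mul_of_nonneg_left (hinvone y) (by positivity)
        _ = (‖x - y‖ ^ 2)⁻¹ := mul_one _
    have hs2 : IntegrableOn (p x) ((Metric.ball x 1)ᶜ ∩ Metric.ball (0:EuclideanSpace ℝ (Fin 4)) ρ) := by
      refine Integrable.mono' (g := fun _ => (1:ℝ))
        (integrableOn_const (C := (1:ℝ))
          (lt_of_le_of_lt (measure_mono Set.inter_subset_right) measure_ball_lt_top).ne)
        ((hpmeas x).aestronglyMeasurable.restrict) ?_
      filter_upwards [ae_restrict_mem ((measurableSet_ball.compl).inter measurableSet_ball)]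
        with y hy
      rw [Real.norm_eq_abs, abs_of_nonneg (hp_nonneg x y), hpdef]
      have h1 : 1 ≤ ‖x - y‖ := by
        have h2 := hy.1
        rw [Set.mem_compl_iff, mem_ball, not_lt, dist_eq_norm] at h2
        calc (1:ℝ) ≤ ‖y - x‖ := h2
          _ = ‖x - y‖ := norm_sub_rev _ _
      have h2 : (‖x - y‖ ^ 2)⁻¹ ≤ 1 := by
        rw [inv_le_one_iff₀]; right; nlinarith [mul_le_mul h1 h1 zero_le_one (le_trans zero_le_one h1)]
      exact mul_le_one₀ h2 (by positivity) (hinvone y)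
    have hs3 : IntegrableOn (p x)
        ((Metric.ball x 1)ᶜ ∩ (Metric.ball (0:EuclideanSpace ℝ (Fin 4)) ρ)ᶜ) := by
      have hout : IntegrableOn (fun y : EuclideanSpace ℝ (Fin 4) => 4 * (‖y‖ ^ 6)⁻¹)
          ((Metric.ball (0:EuclideanSpace ℝ (Fin 4)) ρ)ᶜ) := ((gkd_out ρ hρ).1).const_mul 4
      refine Integrable.mono' (g := fun y => 4 * (‖y‖ ^ 6)⁻¹)
        (hout.mono_set Set.inter_subset_right)
        ((hpmeas x).aestronglyMeasurable.restrict) ?_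
      filter_upwards [ae_restrict_mem ((measurableSet_ball.compl).inter measurableSet_ball.compl)]
        with y hy
      have hyρ : ρ ≤ ‖y‖ := by
        have h2 := hy.2
        rw [Set.mem_compl_iff, mem_ball_zero_iff, not_lt] at h2
        exact h2
      rw [Real.norm_eq_abs, abs_of_nonneg (hp_nonneg x y)]
      exact hfar x y (by rw [hρdef] at hyρ; linarith) (by linarith)
    rw [← integrableOn_univ]
    have hcover : (Set.univ : Set (EuclideanSpace ℝ (Fin 4))) ⊆ Metric.ball x 1 ∪
        (((Metric.ball x 1)ᶜ ∩ Metric.ball (0:EuclideanSpace ℝ (Fin 4)) ρ) ∪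
          ((Metric.ball x 1)ᶜ ∩ (Metric.ball (0:EuclideanSpace ℝ (Fin 4)) ρ)ᶜ)) := by
      intro y _
      by_cases h1 : y ∈ Metric.ball x 1
      · exact Or.inl h1
      · by_cases h2 : y ∈ Metric.ball (0:EuclideanSpace ℝ (Fin 4)) ρ
        · exact Or.inr (Or.inl ⟨h1, h2⟩)
        · exact Or.inr (Or.inr ⟨h1, h2⟩)
    exact (hs1.union (hs2.union hs3)).mono_set hcover
  have hψint : ∀ x, Integrable (fun y => b (x, y) / ((‖x - y‖ : ℂ) ^ 2) * f y) :=
    fun x => Integrable.mono' ((hPint x).const_mul (M * C)) (hmeasψ x)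
      (Filter.Eventually.of_forall (hbound x))
  -- the main quantitative estimate
  set K : ℝ := 42 * (M + 1) * C * gkdV with hKdef
  have hK : 0 < K := by
    have := gkd_V_pos
    rw [hKdef]; positivity
  have main : ∀ x : EuclideanSpace ℝ (Fin 4), 1 ≤ ‖x‖ →
      ‖∫ y, b (x, y) / ((‖x - y‖ : ℂ) ^ 2) * f y‖ ≤ K * Real.log (2 + ‖x‖) / ‖x‖ ^ 2 := by
    intro x hx
    have hR : (0:ℝ) < ‖x‖ := lt_of_lt_of_le one_pos hx
    have hR0 : ‖x‖ ≠ 0 := ne_of_gt hR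
    have hlog1 : 1 ≤ Real.log (2 + ‖x‖) := by
      rw [Real.le_log_iff_exp_le (by linarith)]
      calc Real.exp 1 ≤ 2.7182818286 := Real.exp_one_lt_d9.le
        _ ≤ 2 + ‖x‖ := by linarith
    have hL0 : (0:ℝ) ≤ Real.log (2 + ‖x‖) := le_trans zero_le_one hlog1
    have h0 : ‖∫ y, b (x, y) / ((‖x - y‖ : ℂ) ^ 2) * f y‖ ≤ M * C * ∫ y, p x y :=
      (norm_integral_le_of_norm_le ((hPint x).const_mul (M * C))
        (Filter.Eventually.of_forall (hbound x))).trans (integral_const_mul _ _).le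
    set A : Set (EuclideanSpace ℝ (Fin 4)) := Metric.ball x (‖x‖ / 2) with hAdef
    set D : Set (EuclideanSpace ℝ (Fin 4)) := Metric.ball (0:EuclideanSpace ℝ (Fin 4)) (2 * ‖x‖)
      with hDdef
    have hA : MeasurableSet A := measurableSet_ball
    have hhalf : (0:ℝ) < ‖x‖ / 2 := by linarith
    have h2R : (0:ℝ) < 2 * ‖x‖ := by linarith
    have hsplit1 : ∫ y, p x y = (∫ y in A, p x y) + ∫ y in Aᶜ, p x y :=
      (integral_add_compl hA (hPint x)).symm
    have hsplit2 : ∫ y in Aᶜ, p x y = (∫ y in Aᶜ ∩ D, p x y) + ∫ y in Aᶜ \ D, p x y :=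
      (integral_inter_add_diff measurableSet_ball ((hPint x).integrableOn)).symm
    -- region A
    have hT1 : ∫ y in A, p x y ≤ 8 * gkdV * ((‖x‖ ^ 2)⁻¹) := by
      have hmono : ∫ y in A, p x y ≤ ∫ y in A, (16 / ‖x‖ ^ 4) * (‖x - y‖ ^ 2)⁻¹ := by
        refine setIntegral_mono_on ((hPint x).integrableOn)
          (((gkd_ball_x x (‖x‖ / 2) hhalf).1).const_mul _) hA ?_
        intro y hy
        have h1 : ‖x - y‖ < ‖x‖ / 2 := by
          rw [hAdef, mem_ball, dist_eq_norm] at hy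
          calc ‖x - y‖ = ‖y - x‖ := norm_sub_rev _ _
            _ < ‖x‖ / 2 := hy
        have h2 : ‖x‖ / 2 ≤ ‖y‖ := by
          have h3 : ‖x‖ - ‖y‖ ≤ ‖x - y‖ := norm_sub_norm_le x y
          linarith
        have h3 : (1 + ‖y‖ ^ 4)⁻¹ ≤ 16 / ‖x‖ ^ 4 := by
          have hy4 : ‖x‖ ^ 4 / 16 ≤ 1 + ‖y‖ ^ 4 := by
            nlinarith [pow_le_pow_left₀ (by positivity : (0:ℝ) ≤ ‖x‖ / 2) h2 4]
          calc (1 + ‖y‖ ^ 4)⁻¹ ≤ (‖x‖ ^ 4 / 16)⁻¹ := inv_anti₀ (by positivity) hy4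
            _ = 16 / ‖x‖ ^ 4 := by rw [inv_div]
        rw [hpdef]
        calc (‖x - y‖ ^ 2)⁻¹ * (1 + ‖y‖ ^ 4)⁻¹ ≤ (‖x - y‖ ^ 2)⁻¹ * (16 / ‖x‖ ^ 4) :=
            mul_le_mul_of_nonneg_left h3 (by positivity)
          _ = (16 / ‖x‖ ^ 4) * (‖x - y‖ ^ 2)⁻¹ := by ring
      rw [integral_const_mul, (gkd_ball_x x (‖x‖ / 2) hhalf).2] at hmono
      calc ∫ y in A, p x y ≤ 16 / ‖x‖ ^ 4 * (2 * gkdV * (‖x‖ / 2) ^ 2) := hmono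
        _ = 8 * gkdV * ((‖x‖ ^ 2)⁻¹) := by field_simp; ring
    -- region middle
    have hT2 : ∫ y in Aᶜ ∩ D, p x y ≤ 32 * gkdV * Real.log (2 + ‖x‖) * (‖x‖ ^ 2)⁻¹ := by
      have hmono : ∫ y in Aᶜ ∩ D, p x y ≤ ∫ y in Aᶜ ∩ D, (4 / ‖x‖ ^ 2) * (1 + ‖y‖ ^ 4)⁻¹ := by
        have hmid : IntegrableOn (fun y : EuclideanSpace ℝ (Fin 4) =>
            (4 / ‖x‖ ^ 2) * (1 + ‖y‖ ^ 4)⁻¹) (Aᶜ ∩ D) :=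
          (((gkd_mid (2 * ‖x‖) h2R).1).mono_set Set.inter_subset_right).const_mul _
        refine setIntegral_mono_on ((hPint x).integrableOn) hmid
          (hA.compl.inter measurableSet_ball) ?_
        intro y hy
        have h1 : ‖x‖ / 2 ≤ ‖x - y‖ := by
          have h2 := hy.1
          rw [Set.mem_compl_iff, hAdef, mem_ball, not_lt, dist_eq_norm] at h2
          calc ‖x‖ / 2 ≤ ‖y - x‖ := h2
            _ = ‖x - y‖ := norm_sub_rev _ _
        have h2 : (‖x - y‖ ^ 2)⁻¹ ≤ 4 / ‖x‖ ^ 2 := by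
          have h3 : (‖x‖ / 2) ^ 2 ≤ ‖x - y‖ ^ 2 :=
            pow_le_pow_left₀ (by positivity) h1 2
          calc (‖x - y‖ ^ 2)⁻¹ ≤ ((‖x‖ / 2) ^ 2)⁻¹ := inv_anti₀ (by positivity) h3
            _ = 4 / ‖x‖ ^ 2 := by rw [div_pow, inv_div]; norm_num
        rw [hpdef]
        exact mul_le_mul_of_nonneg_right h2 (by positivity)
      have henl : ∫ y in Aᶜ ∩ D, (1 + ‖y‖ ^ 4)⁻¹ ≤ ∫ y in D, (1 + ‖y‖ ^ 4)⁻¹ := by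
        exact setIntegral_mono_set (gkd_mid (2 * ‖x‖) h2R).1
          (Filter.Eventually.of_forall fun y => by positivity)
          (HasSubset.Subset.eventuallyLE Set.inter_subset_right)
      rw [integral_const_mul] at hmono
      have hlog2 : Real.log (1 + (2 * ‖x‖) ^ 4) ≤ 8 * Real.log (2 + ‖x‖) := by
        have h8 : (8:ℝ) * Real.log (2 + ‖x‖) = Real.log ((2 + ‖x‖) ^ (8:ℕ)) := by
          rw [Real.log_pow]; norm_num
        rw [h8]
        apply Real.log_le_log (by positivity)
        have c1 : 16 + ‖x‖ ^ 4 ≤ (2 + ‖x‖) ^ 4 := by nlinarith [hR.le, pow_nonneg hR.le 3]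
        have c2 : (16 + ‖x‖ ^ 4) ^ 2 ≤ ((2 + ‖x‖) ^ 4) ^ 2 :=
          pow_le_pow_left₀ (by positivity) c1 2
        have c3 : ((2 + ‖x‖) ^ 4) ^ 2 = (2 + ‖x‖) ^ 8 := by rw [← pow_mul]
        nlinarith [pow_nonneg hR.le 8, pow_nonneg hR.le 4]
      calc ∫ y in Aᶜ ∩ D, p x y ≤ 4 / ‖x‖ ^ 2 * ∫ y in Aᶜ ∩ D, (1 + ‖y‖ ^ 4)⁻¹ := hmono
        _ ≤ 4 / ‖x‖ ^ 2 * (gkdV * Real.log (1 + (2 * ‖x‖) ^ 4)) := by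
            refine mul_le_mul_of_nonneg_left ?_ (by positivity)
            rw [← (gkd_mid (2 * ‖x‖) h2R).2]; exact henl
        _ ≤ 4 / ‖x‖ ^ 2 * (gkdV * (8 * Real.log (2 + ‖x‖))) :=
            mul_le_mul_of_nonneg_left
              (mul_le_mul_of_nonneg_left hlog2 gkd_V_pos.le) (by positivity)
        _ = 32 * gkdV * Real.log (2 + ‖x‖) * (‖x‖ ^ 2)⁻¹ := by field_simp; ring
    -- region far
    have hT3 : ∫ y in Aᶜ \ D, p x y ≤ 2 * gkdV * (‖x‖ ^ 2)⁻¹ := by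
      have hsub : Aᶜ \ D ⊆ Dᶜ := fun y hy => hy.2
      have hmono : ∫ y in Aᶜ \ D, p x y ≤ ∫ y in Aᶜ \ D, 4 * (‖y‖ ^ 6)⁻¹ := by
        have hout : IntegrableOn (fun y : EuclideanSpace ℝ (Fin 4) => 4 * (‖y‖ ^ 6)⁻¹)
            Dᶜ := ((gkd_out (2 * ‖x‖) h2R).1).const_mul 4
        refine setIntegral_mono_on ((hPint x).integrableOn)
          (hout.mono_set hsub)
          (hA.compl.diff measurableSet_ball) ?_
        intro y hy
        have hyR : 2 * ‖x‖ ≤ ‖y‖ := by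
          have h2 : y ∉ D := hy.2
          rw [hDdef, mem_ball_zero_iff, not_lt] at h2
          exact h2
        exact hfar x y hyR (by linarith)
      have henl : ∫ y in Aᶜ \ D, (‖y‖ ^ 6)⁻¹ ≤ ∫ y in Dᶜ, (‖y‖ ^ 6)⁻¹ := by
        exact setIntegral_mono_set (gkd_out (2 * ‖x‖) h2R).1
          (Filter.Eventually.of_forall fun y => by positivity)
          (HasSubset.Subset.eventuallyLE hsub)
      rw [integral_const_mul] at hmono
      calc ∫ y in Aᶜ \ D, p x y ≤ 4 * ∫ y in Aᶜ \ D, (‖y‖ ^ 6)⁻¹ := hmono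
        _ ≤ 4 * (2 * gkdV * (((2 * ‖x‖) ^ 2)⁻¹)) := by
            refine mul_le_mul_of_nonneg_left ?_ (by norm_num)
            rw [← (gkd_out (2 * ‖x‖) h2R).2]; exact henl
        _ = 2 * gkdV * (‖x‖ ^ 2)⁻¹ := by field_simp; ring
    have htotal : ∫ y, p x y ≤ 42 * gkdV * Real.log (2 + ‖x‖) * (‖x‖ ^ 2)⁻¹ := by
      rw [hsplit1, hsplit2]
      nlinarith [hT1, hT2, hT3,
        mul_nonneg (mul_nonneg gkd_V_pos.le (sub_nonneg.2 hlog1))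
          (inv_nonneg.2 (sq_nonneg ‖x‖))]
    calc ‖∫ y, b (x, y) / ((‖x - y‖ : ℂ) ^ 2) * f y‖ ≤ M * C * ∫ y, p x y := h0
      _ ≤ M * C * (42 * gkdV * Real.log (2 + ‖x‖) * (‖x‖ ^ 2)⁻¹) := by
          refine mul_le_mul_of_nonneg_left htotal (by positivity)
      _ = (M * C * 42 * gkdV) * (Real.log (2 + ‖x‖) * (‖x‖ ^ 2)⁻¹) := by ring
      _ ≤ (42 * (M + 1) * C * gkdV) * (Real.log (2 + ‖x‖) * (‖x‖ ^ 2)⁻¹) := by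
          refine mul_le_mul_of_nonneg_right ?_ (by positivity)
          nlinarith [mul_nonneg hC.le gkd_V_pos.le]
      _ = K * Real.log (2 + ‖x‖) / ‖x‖ ^ 2 := by
          rw [hKdef, div_eq_mul_inv]; ring
  refine ⟨hψint, ⟨K, hK, main⟩, ?_⟩
  intro ε hε
  refine ⟨K * 3 ^ ε / ε, by positivity, ?_⟩
  intro x hx
  have hR : (0:ℝ) < ‖x‖ := lt_of_lt_of_le one_pos hx
  have h1 := main x hx
  have ha : (0:ℝ) < 2 + ‖x‖ := by linarith
  have h2 : Real.log (2 + ‖x‖) ≤ (2 + ‖x‖) ^ ε / ε := by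
    have h3 : ε * Real.log (2 + ‖x‖) = Real.log ((2 + ‖x‖) ^ ε) := (Real.log_rpow ha ε).symm
    have h4 : Real.log ((2 + ‖x‖) ^ ε) ≤ (2 + ‖x‖) ^ ε - 1 :=
      Real.log_le_sub_one_of_pos (Real.rpow_pos_of_pos ha ε)
    rw [le_div_iff₀ hε]
    nlinarith [Real.rpow_pos_of_pos ha ε]
  have h5 : (2 + ‖x‖) ^ ε ≤ 3 ^ ε * ‖x‖ ^ ε := by
    rw [← Real.mul_rpow (by norm_num) hR.le]
    exact Real.rpow_le_rpow (by linarith) (by linarith) hε.le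
  have hL : Real.log (2 + ‖x‖) ≤ 3 ^ ε / ε * ‖x‖ ^ ε := by
    calc Real.log (2 + ‖x‖) ≤ (2 + ‖x‖) ^ ε / ε := h2
      _ ≤ (3 ^ ε * ‖x‖ ^ ε) / ε := by exact (div_le_div_iff_of_pos_right hε).2 h5
      _ = 3 ^ ε / ε * ‖x‖ ^ ε := by ring
  have hpow : ‖x‖ ^ ε * (‖x‖ ^ 2)⁻¹ = ‖x‖ ^ (-2 + ε) := by
    rw [Real.rpow_add hR, Real.rpow_neg hR.le, Real.rpow_two]
    ring
  calc ‖∫ y, b (x, y) / ((‖x - y‖ : ℂ) ^ 2) * f y‖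
      ≤ K * Real.log (2 + ‖x‖) / ‖x‖ ^ 2 := h1
    _ ≤ K * (3 ^ ε / ε * ‖x‖ ^ ε) / ‖x‖ ^ 2 := by
        exact (div_le_div_iff_of_pos_right (by positivity : (0:ℝ) < ‖x‖ ^ 2)).2
          (mul_le_mul_of_nonneg_left hL hK.le)
    _ = (K * 3 ^ ε / ε) * (‖x‖ ^ ε * (‖x‖ ^ 2)⁻¹) := by
        rw [div_eq_mul_inv, div_eq_mul_inv, div_eq_mul_inv]; ring
    _ = (K * 3 ^ ε / ε) * ‖x‖ ^ (-2 + ε) := by rw [hpow]
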